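/- Let K be a field, α, β : ℤ → K, and z, ζ ∈ K with all shifted powers defined and nonzero and with (ιβ), (ια) defined by (ιγ)_i = γ_{1-i}. Then for every n ≥ 1: (ζ - z) · ∑_{j=1-n}^{0} (1 - α_j β_j) · [(z;α)^{j-1} (ζ|β)^{j-1}] / [(z|β)^{j} (ζ;α)^{j}] = 1 - [(z|ιβ)^{n} (ζ;ια)^{n}] / [(z;ια)^{n} (ζ|ιβ)^{n}]. -/

import Mathlib

/-- Doubly-indexed shifted power `(z;α)^k`: `(1-zα_1)⋯(1-zα_k)` for `k > 0`, `1` for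
`k = 0`, and `[(1-zα_0)(1-zα_{-1})⋯(1-zα_{k+1})]⁻¹` for `k < 0`. -/
noncomputable def cpow {K : Type*} [Field K] (z : K) (α : ℤ → K) (k : ℤ) : K :=
  if 0 ≤ k then ∏ j ∈ Finset.range k.toNat, (1 - z * α ((j : ℤ) + 1))
  else (∏ j ∈ Finset.range (-k).toNat, (1 - z * α (-(j : ℤ))))⁻¹

/-- Doubly-indexed shifted power `(z|β)^k`: `(z-β_1)⋯(z-β_k)` for `k > 0`, `1` for
`k = 0`, and `[(z-β_0)(z-β_{-1})⋯(z-β_{k+1})]⁻¹` for `k < 0`. -/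
noncomputable def ppow {K : Type*} [Field K] (z : K) (β : ℤ → K) (k : ℤ) : K :=
  if 0 ≤ k then ∏ j ∈ Finset.range k.toNat, (z - β ((j : ℤ) + 1))
  else (∏ j ∈ Finset.range (-k).toNat, (z - β (-(j : ℤ))))⁻¹

lemma cpow_neg_nat {K : Type*} [Field K] (z : K) (α : ℤ → K) (m : ℕ) :
    cpow z α (-(m : ℤ)) = (∏ i ∈ Finset.range m, (1 - z * α (-(i : ℤ))))⁻¹ := by
  rcases Nat.eq_zero_or_pos m with h | h
  · subst h; simp [cpow]
  · rw [cpow, if_neg (by omega)]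
    norm_num

lemma ppow_neg_nat {K : Type*} [Field K] (z : K) (β : ℤ → K) (m : ℕ) :
    ppow z β (-(m : ℤ)) = (∏ i ∈ Finset.range m, (z - β (-(i : ℤ))))⁻¹ := by
  rcases Nat.eq_zero_or_pos m with h | h
  · subst h; simp [ppow]
  · rw [ppow, if_neg (by omega)]
    norm_num

lemma cpow_iota {K : Type*} [Field K] (z : K) (α : ℤ → K) (n : ℕ) :
    cpow z (fun i => α (1 - i)) (n : ℤ) = ∏ i ∈ Finset.range n, (1 - z * α (-(i : ℤ))) := by
  rw [cpow, if_pos (by positivity)]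
  simp only [Int.toNat_natCast]
  exact Finset.prod_congr rfl fun i _ => by norm_num

lemma ppow_iota {K : Type*} [Field K] (z : K) (β : ℤ → K) (n : ℕ) :
    ppow z (fun i => β (1 - i)) (n : ℤ) = ∏ i ∈ Finset.range n, (z - β (-(i : ℤ))) := by
  rw [ppow, if_pos (by positivity)]
  simp only [Int.toNat_natCast]
  exact Finset.prod_congr rfl fun i _ => by norm_num

lemma aux_inv {K : Type*} [Field K] (X a b c d : K)
    (ha : a ≠ 0) (hb : b ≠ 0) (hc : c ≠ 0) (hd : d ≠ 0) :
    X * (a⁻¹ * b⁻¹) / (c⁻¹ * d⁻¹) = X * (c * d) / (a * b) := by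
  field_simp

lemma key {K : Type*} [Field K] (α β : ℤ → K) (z ζ : K)
    (h1 : ∀ j, z - β j ≠ 0) (h2 : ∀ j, 1 - z * α j ≠ 0)
    (h3 : ∀ j, ζ - β j ≠ 0) (h4 : ∀ j, 1 - ζ * α j ≠ 0) (n : ℕ) :
    (ζ - z) * ∑ m ∈ Finset.range n,
      (1 - α (-(m:ℤ)) * β (-(m:ℤ))) *
        ((∏ i ∈ Finset.range m, (z - β (-(i:ℤ)))) * ∏ i ∈ Finset.range m, (1 - ζ * α (-(i:ℤ)))) /
        ((∏ i ∈ Finset.range (m+1), (1 - z * α (-(i:ℤ)))) * ∏ i ∈ Finset.range (m+1), (ζ - β (-(i:ℤ)))) =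
    1 - (∏ i ∈ Finset.range n, (z - β (-(i:ℤ)))) * (∏ i ∈ Finset.range n, (1 - ζ * α (-(i:ℤ)))) /
        ((∏ i ∈ Finset.range n, (1 - z * α (-(i:ℤ)))) * ∏ i ∈ Finset.range n, (ζ - β (-(i:ℤ)))) := by
  have hA : ∀ m : ℕ, (∏ i ∈ Finset.range m, (1 - z * α (-(i:ℤ)))) ≠ 0 :=
    fun m => Finset.prod_ne_zero_iff.2 fun i _ => h2 _
  have hD : ∀ m : ℕ, (∏ i ∈ Finset.range m, (ζ - β (-(i:ℤ)))) ≠ 0 :=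
    fun m => Finset.prod_ne_zero_iff.2 fun i _ => h3 _
  induction n with
  | zero => simp
  | succ n ih =>
    rw [Finset.sum_range_succ, mul_add, ih, Finset.prod_range_succ, Finset.prod_range_succ,
      Finset.prod_range_succ (f := fun i => (z - β (-(i:ℤ)))),
      Finset.prod_range_succ (f := fun i => (1 - ζ * α (-(i:ℤ))))]
    have e2 := h2 (-(n:ℤ)); have e3 := h3 (-(n:ℤ))
    have eA := hA n; have eD := hD n
    field_simp
    ring

/-- The negative-index telescoping identity:
`(ζ - z) ∑_{j=1-n}^{0} (1-α_jβ_j) (z;α)^{j-1}(ζ|β)^{j-1}/[(z|β)^j (ζ;α)^j]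
  = 1 - (z|ιβ)^n (ζ;ια)^n / [(z;ια)^n (ζ|ιβ)^n]`, where `(ιγ)_i = γ_{1-i}`. -/
theorem stmt_15 {K : Type*} [Field K] (α β : ℤ → K) (z ζ : K)
    (h1 : ∀ j, z - β j ≠ 0) (h2 : ∀ j, 1 - z * α j ≠ 0)
    (h3 : ∀ j, ζ - β j ≠ 0) (h4 : ∀ j, 1 - ζ * α j ≠ 0) (n : ℕ) (hn : 1 ≤ n) :
    (ζ - z) * ∑ j ∈ Finset.Icc (1 - (n : ℤ)) 0,
        (1 - α j * β j) * (cpow z α (j - 1) * ppow ζ β (j - 1)) /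
          (ppow z β j * cpow ζ α j) =
      1 - ppow z (fun i => β (1 - i)) (n : ℤ) * cpow ζ (fun i => α (1 - i)) (n : ℤ) /
        (cpow z (fun i => α (1 - i)) (n : ℤ) * ppow ζ (fun i => β (1 - i)) (n : ℤ)) := by
  have himg : Finset.Icc (1 - (n : ℤ)) 0 = (Finset.range n).image (fun m : ℕ => -(m : ℤ)) := by
    ext x
    simp only [Finset.mem_Icc, Finset.mem_image, Finset.mem_range]
    constructor
    · rintro ⟨hx1, hx2⟩
      exact ⟨(-x).toNat, by omega, by omega⟩
    · rintro ⟨m, hm, rfl⟩; omega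
  rw [himg, Finset.sum_image (by intro a _ b _ h; have h' : -(a:ℤ) = -(b:ℤ) := h; omega)]
  have hterm : ∀ m : ℕ,
      (1 - α (-(m:ℤ)) * β (-(m:ℤ))) * (cpow z α ((-(m:ℤ)) - 1) * ppow ζ β ((-(m:ℤ)) - 1)) /
          (ppow z β (-(m:ℤ)) * cpow ζ α (-(m:ℤ))) =
      (1 - α (-(m:ℤ)) * β (-(m:ℤ))) *
        ((∏ i ∈ Finset.range m, (z - β (-(i:ℤ)))) * ∏ i ∈ Finset.range m, (1 - ζ * α (-(i:ℤ)))) /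
        ((∏ i ∈ Finset.range (m+1), (1 - z * α (-(i:ℤ)))) * ∏ i ∈ Finset.range (m+1), (ζ - β (-(i:ℤ)))) := by
    intro m
    have e1 : (-(m:ℤ)) - 1 = -((m+1 : ℕ) : ℤ) := by push_cast; ring
    rw [e1, cpow_neg_nat, ppow_neg_nat, ppow_neg_nat, cpow_neg_nat]
    exact aux_inv _ _ _ _ _ (Finset.prod_ne_zero_iff.2 fun i _ => h2 _)
      (Finset.prod_ne_zero_iff.2 fun i _ => h3 _)
      (Finset.prod_ne_zero_iff.2 fun i _ => h1 _)
      (Finset.prod_ne_zero_iff.2 fun i _ => h4 _)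
  simp only [hterm]
  rw [key α β z ζ h1 h2 h3 h4 n, ppow_iota, cpow_iota, cpow_iota, ppow_iota]
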